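/- Let S be a finite singleton-rich semigroup on which the relation ≪ is transitive. Define the sharp product s ♯ᵉ t = st if s⁺ = (st)⁺, t* = (st)*, and s* = t⁺ = e, and 0 otherwise, and define on ℂS the binary operation Z(s) ∗ Z(t) = Σ_{s' ≪ s, t' ≪ t} s' ♯^{φ^{((s')⁺ s, t (t')*)}} t', where Z(x) = Σ_{x' ≪ x} x'. Then Z(s) ∗ Z(t) = Z(st) for all s, t ∈ S; consequently Z : (ℂS, ∗) → ℂS is an isomorphism of ℂ-algebras. -/

import Mathlib

open scoped Classical

/-- φ*(s): the idempotent right identities of `s`. -/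
def rIds {S : Type*} [Mul S] (s : S) : Set S := {e | e * e = e ∧ s * e = s}

/-- φ⁺(s): the idempotent left identities of `s`. -/
def lIds {S : Type*} [Mul S] (s : S) : Set S := {e | e * e = e ∧ e * s = s}

/-- `x` is the (necessarily unique) element of a singleton kernel (minimal ideal) of the
subsemigroup `T`: `{x}` is an ideal of `T`, hence the minimal ideal of `T`. -/
def IsKer {S : Type*} [Semigroup S] (T : Subsemigroup S) (x : S) : Prop :=
  x ∈ T ∧ ∀ a ∈ T, a * x = x ∧ x * a = x

/-- The natural partial order on idempotents: `e ≤ f` iff `ef = fe = e`. -/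
def nle {S : Type*} [Mul S] (e f : S) : Prop := e * f = e ∧ f * e = e

/-- The relation `≪`: `s ≪ t` iff `s = s⁺ t s*`, where `sa s = s*` and `pl s = s⁺`. -/
def ll {S : Type*} [Mul S] (sa pl : S → S) (s t : S) : Prop := s = pl s * t * sa s

/-- φ(x,y) = (x* y)⁺. -/
def phiF {S : Type*} [Mul S] (sa pl : S → S) (x y : S) : S := pl (sa x * y)

/-- ψ(x,y) = (x y⁺)*. -/
def psiF {S : Type*} [Mul S] (sa pl : S → S) (x y : S) : S := sa (x * pl y)

/-- The φ-sequence: `(s^φ₀, t^φ₀) = (s, t)`,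
`s^φ_{i+1} = s^φ_i φ(s^φ_i, t^φ_i)`, `t^φ_{i+1} = (s^φ_i)* t^φ_i`. -/
def phiSeq {S : Type*} [Mul S] (sa pl : S → S) (s t : S) : ℕ → S × S
  | 0 => (s, t)
  | i + 1 =>
      let p := phiSeq sa pl s t i
      (p.1 * phiF sa pl p.1 p.2, sa p.1 * p.2)

/-- The ψ-sequence: `(s^ψ₀, t^ψ₀) = (s, t)`,
`s^ψ_{i+1} = s^ψ_i (t^ψ_i)⁺`, `t^ψ_{i+1} = ψ(s^ψ_i, t^ψ_i) t^ψ_i`. -/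
def psiSeq {S : Type*} [Mul S] (sa pl : S → S) (s t : S) : ℕ → S × S
  | 0 => (s, t)
  | i + 1 =>
      let p := psiSeq sa pl s t i
      (p.1 * pl p.2, psiF sa pl p.1 p.2 * p.2)

/-- `e` is the stable (eventual) value `φ^{(s,t)}` of the sequence `φ(s^φ_i, t^φ_i)`. -/
def IsPhiLim {S : Type*} [Mul S] (sa pl : S → S) (s t e : S) : Prop :=
  ∃ N : ℕ, ∀ i ≥ N, phiF sa pl (phiSeq sa pl s t i).1 (phiSeq sa pl s t i).2 = e

/-- `e` is the stable (eventual) value `ψ^{(s,t)}` of the sequence `ψ(s^ψ_i, t^ψ_i)`. -/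
def IsPsiLim {S : Type*} [Mul S] (sa pl : S → S) (s t e : S) : Prop :=
  ∃ N : ℕ, ∀ i ≥ N, psiF sa pl (psiSeq sa pl s t i).1 (psiSeq sa pl s t i).2 = e

/-- `Z(x) = Σ_{x' ≪ x} x'` as an element of `ℂS`. -/
noncomputable def Zb {S : Type*} [Semigroup S] [Fintype S] (sa pl : S → S) (x : S) :
    MonoidAlgebra ℂ S :=
  ∑ x' ∈ Finset.univ.filter (fun x' => ll sa pl x' x), MonoidAlgebra.single x' (1 : ℂ)

/-- The sharp product `s ♯ᵉ t`: it equals `st` if `s⁺ = (st)⁺`, `t* = (st)*` and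
`s* = t⁺ = e`, and `0` otherwise. -/
noncomputable def sharpE {S : Type*} [Semigroup S] [Fintype S] (sa pl : S → S)
    (e s t : S) : MonoidAlgebra ℂ S :=
  if pl s = pl (s * t) ∧ sa t = sa (s * t) ∧ sa s = e ∧ pl t = e then
    MonoidAlgebra.single (s * t) (1 : ℂ)
  else 0

/-- The linear extension of `Z` to `ℂS`: `(Z f)(s') = Σ_{s' ≪ s} f(s)`. -/
noncomputable def Zhat {S : Type*} [Semigroup S] [Fintype S] (sa pl : S → S) :
    MonoidAlgebra ℂ S → MonoidAlgebra ℂ S := fun f =>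
  MonoidAlgebra.ofCoeff (Finsupp.equivFunOnFinite.symm fun s' => ∑ s : S, if ll sa pl s' s then f.coeff s else 0)

set_option linter.unusedSectionVars false

section Basics
variable {S : Type*} [Semigroup S] {sa pl : S → S}

theorem closure_rIds_right_id {s a : S} (ha : a ∈ Subsemigroup.closure (rIds s)) :
    s * a = s := by
  induction ha using Subsemigroup.closure_induction with
  | mem x hx => exact hx.2
  | mul x y hx hy ihx ihy => rw [← mul_assoc, ihx, ihy]

theorem closure_lIds_left_id {s a : S} (ha : a ∈ Subsemigroup.closure (lIds s)) :
    a * s = s := by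
  induction ha using Subsemigroup.closure_induction with
  | mem x hx => exact hx.2
  | mul x y hx hy ihx ihy => rw [mul_assoc, ihy, ihx]

variable (hsa : ∀ s : S, IsKer (Subsemigroup.closure (rIds s)) (sa s))
variable (hpl : ∀ s : S, IsKer (Subsemigroup.closure (lIds s)) (pl s))
include hsa hpl

theorem mul_sa (s : S) : s * sa s = s := closure_rIds_right_id (hsa s).1

theorem pl_mul (s : S) : pl s * s = s := closure_lIds_left_id (hpl s).1

theorem sa_idem (s : S) : sa s * sa s = sa s := ((hsa s).2 _ (hsa s).1).1

theorem pl_idem (s : S) : pl s * pl s = pl s := ((hpl s).2 _ (hpl s).1).1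

/-- absorption of an idempotent right identity into `sa s`. -/
theorem sa_absorb {s e : S} (he : e * e = e) (hse : s * e = s) :
    e * sa s = sa s ∧ sa s * e = sa s :=
  (hsa s).2 e (Subsemigroup.subset_closure ⟨he, hse⟩)

theorem pl_absorb {s e : S} (he : e * e = e) (hes : e * s = s) :
    e * pl s = pl s ∧ pl s * e = pl s :=
  (hpl s).2 e (Subsemigroup.subset_closure ⟨he, hes⟩)

theorem sa_of_idem {e : S} (he : e * e = e) : sa e = e := by
  have h1 : e * sa e = e := mul_sa hsa hpl e
  have h2 : e * sa e = sa e := (sa_absorb hsa hpl he he).1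
  rw [← h2, h1]

theorem pl_of_idem {e : S} (he : e * e = e) : pl e = e := by
  have h1 : pl e * e = e := pl_mul hsa hpl e
  have h2 : pl e * e = pl e := (pl_absorb hsa hpl he he).2
  rw [← h2, h1]

theorem nle_sa_mul (x y : S) : nle (sa (x * y)) (sa y) := by
  have hsub : rIds y ⊆ rIds (x * y) := by
    rintro e ⟨he, hye⟩; exact ⟨he, by rw [mul_assoc, hye]⟩
  have hmem : sa y ∈ Subsemigroup.closure (rIds (x * y)) :=
    Subsemigroup.closure_mono hsub (hsa y).1
  have h := (hsa (x * y)).2 _ hmem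
  exact ⟨h.2, h.1⟩

theorem nle_pl_mul (x y : S) : nle (pl (x * y)) (pl x) := by
  have hsub : lIds x ⊆ lIds (x * y) := by
    rintro e ⟨he, hex⟩; exact ⟨he, by rw [← mul_assoc, hex]⟩
  have hmem : pl x ∈ Subsemigroup.closure (lIds (x * y)) :=
    Subsemigroup.closure_mono hsub (hpl x).1
  have h := (hpl (x * y)).2 _ hmem
  exact ⟨h.2, h.1⟩

omit hsa hpl in
theorem nle_trans {a b c : S} (hab : nle a b) (hbc : nle b c) : nle a c :=
  ⟨by rw [← hab.1, mul_assoc, hbc.1], by rw [← hab.2, ← mul_assoc, hbc.2]⟩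

omit hsa hpl in
theorem nle_antisymm {a b : S} (hab : nle a b) (hba : nle b a) : a = b := by
  rw [← hab.1, hba.2]

/-- no two-element left-zero subsemigroup. -/
theorem no_left_zero {e g : S} (he : e * e = e) (hg : g * g = g)
    (heg : e * g = e) (hge : g * e = g) : e = g := by
  have h := (hsa e).2 g (Subsemigroup.subset_closure ⟨hg, heg⟩)
  -- h : g * sa e = sa e ∧ sa e * g = sa e
  have hsae : sa e = e := sa_of_idem hsa hpl he
  rw [hsae] at h
  rw [← hge, h.1]

/-- no two-element right-zero subsemigroup. -/
theorem no_right_zero {e g : S} (he : e * e = e) (hg : g * g = g)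
    (heg : e * g = g) (hge : g * e = e) : e = g := by
  have h := (hpl e).2 g (Subsemigroup.subset_closure ⟨hg, hge⟩)
  have hple : pl e = e := pl_of_idem hsa hpl he
  rw [hple] at h
  rw [← h.2, heg]

theorem ll_refl (s : S) : ll sa pl s s := by
  unfold ll; rw [pl_mul hsa hpl, mul_sa hsa hpl]

end Basics

section Pow
variable {S : Type*} [Semigroup S]

/-- `mp a n = a ^ (n+1)`. -/
def mp (a : S) : ℕ → S
  | 0 => a
  | n + 1 => mp a n * a

theorem mp_succ (a : S) (n : ℕ) : mp a (n + 1) = mp a n * a := rfl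

theorem mp_comm (a : S) (n : ℕ) : mp a n * a = a * mp a n := by
  induction n with
  | zero => rfl
  | succ n ih => rw [mp_succ, mul_assoc, ← mul_assoc a, ← ih, mul_assoc]

theorem mp_add (a : S) (m n : ℕ) : mp a m * mp a n = mp a (m + n + 1) := by
  induction n with
  | zero => rfl
  | succ n ih =>
      rw [mp_succ, ← mul_assoc, ih]
      rfl

theorem mp_period (a : S) {i d : ℕ} (hd : mp a (i + d) = mp a i) :
    ∀ m, i ≤ m → mp a (m + d) = mp a m := by
  intro m hm
  induction m, hm using Nat.le_induction with
  | base => exact hd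
  | succ m hm ih =>
      have : m + 1 + d = (m + d) + 1 := by omega
      rw [this, mp_succ, ih, mp_succ]

theorem mp_period_mul (a : S) {i d : ℕ} (hd : mp a (i + d) = mp a i) :
    ∀ k m, i ≤ m → mp a (m + k * d) = mp a m := by
  intro k
  induction k with
  | zero => simp
  | succ k ih =>
      intro m hm
      have : m + (k + 1) * d = (m + k * d) + d := by ring
      rw [this, mp_period a hd _ (le_trans hm (Nat.le_add_right _ _)), ih m hm]

theorem exists_period (a : S) [Fintype S] : ∃ i d, 0 < d ∧ mp a (i + d) = mp a i := by
  obtain ⟨x, y, hxy, hfx⟩ := Finite.exists_ne_map_eq_of_infinite (mp a)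
  rcases Nat.lt_or_ge x y with h | h
  · exact ⟨x, y - x, by omega, by rw [show x + (y - x) = y by omega, hfx]⟩
  · have : y < x := by omega
    exact ⟨y, x - y, by omega, by rw [show y + (x - y) = x by omega, ← hfx]⟩

/-- simultaneous idempotent powers. -/
theorem exists_pow_idem_pair (p q : S) [Fintype S] :
    ∃ n, mp p n * mp p n = mp p n ∧ mp q n * mp q n = mp q n := by
  obtain ⟨i₁, d₁, hd₁, hp₁⟩ := exists_period p
  obtain ⟨i₂, d₂, hd₂, hp₂⟩ := exists_period q
  set M := max i₁ i₂ with hM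
  set n := (M + 1) * (d₁ * d₂) - 1 with hn
  have hdd : 1 ≤ d₁ * d₂ := Nat.mul_pos hd₁ hd₂
  have hpos : 1 ≤ (M + 1) * (d₁ * d₂) :=
    le_trans hdd (Nat.le_mul_of_pos_left _ (by omega))
  have hn1 : n + 1 = (M + 1) * (d₁ * d₂) := by omega
  have hle : M + 1 ≤ (M + 1) * (d₁ * d₂) := Nat.le_mul_of_pos_right _ (by omega)
  have hM1 : i₁ ≤ M := le_max_left _ _
  have hM2 : i₂ ≤ M := le_max_right _ _
  have hni1 : i₁ ≤ n := by omega
  have hni2 : i₂ ≤ n := by omega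
  refine ⟨n, ?_, ?_⟩
  · have e1 : ((M + 1) * d₂) * d₁ = (M + 1) * (d₁ * d₂) := by ring
    have key : mp p (n + ((M + 1) * d₂) * d₁) = mp p n :=
      mp_period_mul p hp₁ _ n hni1
    rw [mp_add, show n + n + 1 = n + ((M + 1) * d₂) * d₁ by omega]
    exact key
  · have e2 : ((M + 1) * d₁) * d₂ = (M + 1) * (d₁ * d₂) := by ring
    have key : mp q (n + ((M + 1) * d₁) * d₂) = mp q n :=
      mp_period_mul q hp₂ _ n hni2
    rw [mp_add, show n + n + 1 = n + ((M + 1) * d₁) * d₂ by omega]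
    exact key

theorem mp_tail_absorb {a b : S} (hb : b * b = b) (n : ℕ) :
    mp (a * b) n * b = mp (a * b) n := by
  induction n with
  | zero => show a * b * b = a * b; rw [mul_assoc, hb]
  | succ n ih => rw [mp_succ, mul_assoc, mul_assoc, hb, ← mul_assoc]

theorem mp_head_absorb {a b : S} (ha : a * a = a) (n : ℕ) :
    a * mp (a * b) n = mp (a * b) n := by
  induction n with
  | zero => show a * (a * b) = a * b; rw [← mul_assoc, ha]
  | succ n ih => rw [mp_succ, ← mul_assoc, ih]

theorem sandwich {t p q : S} (h : t = p * t * q) :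
    ∀ n, t = mp p n * t * mp q n := by
  intro n
  induction n with
  | zero => exact h
  | succ n ih =>
      calc t = p * t * q := h
      _ = p * (mp p n * t * mp q n) * q := by rw [← ih]
      _ = (p * mp p n) * t * (mp q n * q) := by simp only [mul_assoc]
      _ = mp p (n+1) * t * mp q (n+1) := by rw [mp_succ, mp_succ, ← mp_comm p n]

end Pow

section Anti
variable {S : Type*} [Semigroup S] [Fintype S] {sa pl : S → S}
variable (hsa : ∀ s : S, IsKer (Subsemigroup.closure (rIds s)) (sa s))
variable (hpl : ∀ s : S, IsKer (Subsemigroup.closure (lIds s)) (pl s))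
include hsa hpl

/-- key step: from `t ≪ s` and `s ≪ t`, `pl t * pl s = pl t` and `sa s * sa t = sa t`. -/
theorem anti_step {s t : S} (hst : ll sa pl s t) (hts : ll sa pl t s) :
    pl t * pl s = pl t ∧ sa s * sa t = sa t := by
  have hdecomp : t = (pl t * pl s) * t * (sa s * sa t) := by
    calc t = pl t * s * sa t := hts
    _ = pl t * (pl s * t * sa s) * sa t := by rw [← hst]
    _ = (pl t * pl s) * t * (sa s * sa t) := by simp only [mul_assoc]
  obtain ⟨n, hFi, hGi⟩ := exists_pow_idem_pair (pl t * pl s) (sa s * sa t)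
  set F := mp (pl t * pl s) n with hF
  set G := mp (sa s * sa t) n with hG
  have hFtG : t = F * t * G := sandwich hdecomp n
  have hFt : F * t = t := by
    calc F * t = F * (F * t * G) := by rw [← hFtG]
    _ = (F * F) * t * G := by simp only [mul_assoc]
    _ = F * t * G := by rw [hFi]
    _ = t := hFtG.symm
  have htG : t * G = t := by
    calc t * G = (F * t * G) * G := by rw [← hFtG]
    _ = F * t * (G * G) := by simp only [mul_assoc]
    _ = F * t * G := by rw [hGi]
    _ = t := hFtG.symm
  constructor
  · -- pl t * pl s = pl t
    have habs := pl_absorb hsa hpl hFi hFt   -- F * pl t = pl t ∧ pl t * F = pl t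
    have hFpls : F * pl s = F := mp_tail_absorb (pl_idem hsa hpl s) n
    calc pl t * pl s = (pl t * F) * pl s := by rw [habs.2]
    _ = pl t * (F * pl s) := mul_assoc _ _ _
    _ = pl t * F := by rw [hFpls]
    _ = pl t := habs.2
  · have habs := sa_absorb hsa hpl hGi htG  -- G * sa t = sa t ∧ sa t * G = sa t
    have hsasG : sa s * G = G := mp_head_absorb (sa_idem hsa hpl s) n
    calc sa s * sa t = sa s * (G * sa t) := by rw [habs.1]
    _ = (sa s * G) * sa t := (mul_assoc _ _ _).symm
    _ = G * sa t := by rw [hsasG]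
    _ = sa t := habs.1

/-- antisymmetry of `≪`. -/
theorem ll_antisymm {s t : S} (hst : ll sa pl s t) (hts : ll sa pl t s) : s = t := by
  obtain ⟨h1, h2⟩ := anti_step hsa hpl hst hts
  obtain ⟨h1', h2'⟩ := anti_step hsa hpl hts hst
  -- h1 : pl t * pl s = pl t, h1' : pl s * pl t = pl s : left-zero pair
  have hpp : pl s = pl t :=
    no_left_zero hsa hpl (pl_idem hsa hpl s) (pl_idem hsa hpl t) h1' h1
  -- h2 : sa s * sa t = sa t, h2' : sa t * sa s = sa s : right-zero pair
  have hss : sa s = sa t :=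
    no_right_zero hsa hpl (sa_idem hsa hpl s) (sa_idem hsa hpl t) h2 h2'
  calc s = pl s * t * sa s := hst
  _ = pl t * t * sa t := by rw [hpp, hss]
  _ = t * sa t := by rw [pl_mul hsa hpl]
  _ = t := mul_sa hsa hpl t

end Anti

section Phi
variable {S : Type*} [Semigroup S] [Fintype S] {sa pl : S → S}
variable (hsa : ∀ s : S, IsKer (Subsemigroup.closure (rIds s)) (sa s))
variable (hpl : ∀ s : S, IsKer (Subsemigroup.closure (lIds s)) (pl s))
include hsa hpl

theorem phi_props {u v e : S} (hlim : IsPhiLim sa pl u v e) :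
    e * e = e ∧ u * e * v = u * v ∧ sa (u * e) = e ∧ pl (e * v) = e := by
  obtain ⟨N, hN⟩ := hlim
  set Sq : ℕ → S := fun i => (phiSeq sa pl u v i).1 with hSq
  set Tq : ℕ → S := fun i => (phiSeq sa pl u v i).2 with hTq
  set Φ : ℕ → S := fun i => phiF sa pl (Sq i) (Tq i) with hΦ
  have hSrec : ∀ i, Sq (i + 1) = Sq i * Φ i := fun i => rfl
  have hTrec : ∀ i, Tq (i + 1) = sa (Sq i) * Tq i := fun i => rfl
  have hΦdef : ∀ i, Φ i = pl (sa (Sq i) * Tq i) := fun i => rfl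
  have hΦN : ∀ i ≥ N, Φ i = e := hN
  -- c1 : each Φ i is idempotent
  have c1 : ∀ i, Φ i * Φ i = Φ i := fun i => by rw [hΦdef]; exact pl_idem hsa hpl _
  -- c2 : Φ i * Tq (i+1) = Tq (i+1)
  have c2 : ∀ i, Φ i * Tq (i + 1) = Tq (i + 1) := fun i => by
    rw [hTrec, hΦdef]; exact pl_mul hsa hpl _
  -- c3 : sa (Sq i) absorbs into Φ i
  have c3 : ∀ i, sa (Sq i) * Φ i = Φ i ∧ Φ i * sa (Sq i) = Φ i := fun i => by
    rw [hΦdef]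
    exact pl_absorb hsa hpl (sa_idem hsa hpl _)
      (by rw [← mul_assoc, sa_idem hsa hpl])
  -- c5 : Sq (i+1) * Φ i = Sq (i+1)
  have c5 : ∀ i, Sq (i + 1) * Φ i = Sq (i + 1) := fun i => by
    rw [hSrec, mul_assoc, c1]
  -- c6 : Φ i absorbs into sa (Sq (i+1))
  have c6 : ∀ i, Φ i * sa (Sq (i + 1)) = sa (Sq (i + 1)) ∧
      sa (Sq (i + 1)) * Φ i = sa (Sq (i + 1)) := fun i =>
    sa_absorb hsa hpl (c1 i) (c5 i)
  -- c7 : Φ (i+1) * Φ i = Φ (i+1) ∧ Φ i * Φ (i+1) = Φ (i+1)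
  have c7 : ∀ i, Φ (i + 1) * Φ i = Φ (i + 1) ∧ Φ i * Φ (i + 1) = Φ (i + 1) := fun i => by
    have h := pl_absorb hsa hpl (S := S) (e := Φ i)
      (s := sa (Sq (i + 1)) * Tq (i + 1)) (c1 i)
      (by rw [← mul_assoc, (c6 i).1])
    rw [← hΦdef (i + 1)] at h
    exact ⟨h.2, h.1⟩
  -- c9 : Sq (i+1) = u * Φ i
  have c9 : ∀ i, Sq (i + 1) = u * Φ i := by
    intro i
    induction i with
    | zero => rw [hSrec]; rfl
    | succ i ih => rw [hSrec, ih, mul_assoc, (c7 i).2]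
  -- e is idempotent
  have he : e * e = e := by rw [← hΦN N le_rfl]; exact c1 N
  -- c8 : ∀ i ≤ N, e * Φ i = e ∧ Φ i * e = e
  have c8aux : ∀ k i, i + k = N → e * Φ i = e ∧ Φ i * e = e := by
    intro k
    induction k with
    | zero => intro i hi; rw [hΦN i (by omega)]; exact ⟨he, he⟩
    | succ k ih =>
        intro i hi
        have hih := ih (i + 1) (by omega)
        constructor
        · rw [← hih.1, mul_assoc, (c7 i).1]
        · rw [← hih.2, ← mul_assoc, (c7 i).2]
  have c8 : ∀ i, i ≤ N → e * Φ i = e ∧ Φ i * e = e := fun i hi =>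
    c8aux (N - i) i (by omega)
  -- Sq (N+1) = u * e
  have hSN : Sq (N + 1) = u * e := by rw [c9 N, hΦN N le_rfl]
  -- c11 : sa (Sq (N+1)) = e
  have c11 : sa (Sq (N + 1)) = e := by
    have h1 : Sq (N + 1) * e = Sq (N + 1) := by
      rw [hSN, mul_assoc, he]
    have h2 := sa_absorb hsa hpl he h1   -- e * sa _ = sa _ ∧ sa _ * e = sa _
    have h3 : sa (Sq (N + 1)) * Φ (N + 1) = Φ (N + 1) := (c3 (N + 1)).1
    rw [hΦN (N + 1) (by omega)] at h3
    rw [← h3, h2.2]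
  -- c10 : ∀ i ≤ N, e * sa (Sq i) = e
  have c10 : ∀ i, i ≤ N → e * sa (Sq i) = e := by
    intro i hi
    calc e * sa (Sq i) = (e * Φ i) * sa (Sq i) := by rw [(c8 i hi).1]
    _ = e * (Φ i * sa (Sq i)) := mul_assoc _ _ _
    _ = e * Φ i := by rw [(c3 i).2]
    _ = e := (c8 i hi).1
  -- c12 : ∀ i ≤ N + 1, e * Tq i = e * v
  have c12 : ∀ i, i ≤ N + 1 → e * Tq i = e * v := by
    intro i
    induction i with
    | zero => intro _; rfl
    | succ i ih =>
        intro hi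
        calc e * Tq (i + 1) = e * (sa (Sq i) * Tq i) := by rw [hTrec]
        _ = (e * sa (Sq i)) * Tq i := (mul_assoc _ _ _).symm
        _ = e * Tq i := by rw [c10 i (by omega)]
        _ = e * v := ih (by omega)
  -- c13 : Tq (N+2) = e * v
  have c13 : Tq (N + 2) = e * v := by
    rw [hTrec, c11, c12 (N + 1) le_rfl]
  -- pl (e * v) = e
  have hC : pl (e * v) = e := by
    rw [← c13, hTrec (N + 1), ← hΦdef (N + 1), hΦN (N + 1) (by omega)]
  -- invariant : Sq i * Tq i = u * v
  have hinv : ∀ i, Sq i * Tq i = u * v := by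
    intro i
    induction i with
    | zero => rfl
    | succ i ih =>
        calc Sq (i + 1) * Tq (i + 1) = (Sq i * Φ i) * Tq (i + 1) := by rw [hSrec]
        _ = Sq i * (Φ i * Tq (i + 1)) := mul_assoc _ _ _
        _ = Sq i * Tq (i + 1) := by rw [c2]
        _ = Sq i * (sa (Sq i) * Tq i) := by rw [hTrec]
        _ = (Sq i * sa (Sq i)) * Tq i := (mul_assoc _ _ _).symm
        _ = Sq i * Tq i := by rw [mul_sa hsa hpl]
        _ = u * v := ih
  -- A : u * e * v = u * v
  have hA : u * e * v = u * v := by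
    have hS2 : Sq (N + 2) = u * e := by
      rw [c9 (N + 1), hΦN (N + 1) (by omega)]
    calc u * e * v = u * (e * e) * v := by rw [he]
    _ = u * e * (e * v) := by simp only [mul_assoc]
    _ = Sq (N + 2) * Tq (N + 2) := by rw [hS2, c13]
    _ = u * v := hinv (N + 2)
  -- B : sa (u * e) = e
  have hB : sa (u * e) = e := by rw [← hSN, c11]
  exact ⟨he, hA, hB, hC⟩

end Phi

section KeySum
variable {S : Type*} [Semigroup S] [Fintype S] {sa pl : S → S}
variable (hsa : ∀ s : S, IsKer (Subsemigroup.closure (rIds s)) (sa s))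
variable (hpl : ∀ s : S, IsKer (Subsemigroup.closure (lIds s)) (pl s))
include hsa hpl

theorem key_sum (phiV : S → S → S) (hphiV : ∀ u v : S, IsPhiLim sa pl u v (phiV u v))
    (s t : S) :
    (∑ s' ∈ Finset.univ.filter (fun s' => ll sa pl s' s),
        ∑ t' ∈ Finset.univ.filter (fun t' => ll sa pl t' t),
          sharpE sa pl (phiV (pl s' * s) (t * sa t')) s' t') = Zb sa pl (s * t) := by
  classical
  have hP := fun (u v : S) => phi_props hsa hpl (hphiV u v)
  set A := Finset.univ.filter (fun s' => ll sa pl s' s) with hA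
  set B := Finset.univ.filter (fun t' => ll sa pl t' t) with hB
  set Cond : S × S → Prop := fun x =>
    pl x.1 = pl (x.1 * x.2) ∧ sa x.2 = sa (x.1 * x.2) ∧
      sa x.1 = phiV (pl x.1 * s) (t * sa x.2) ∧ pl x.2 = phiV (pl x.1 * s) (t * sa x.2)
    with hCond
  have step1 : (∑ s' ∈ A, ∑ t' ∈ B, sharpE sa pl (phiV (pl s' * s) (t * sa t')) s' t')
      = ∑ x ∈ A ×ˢ B, sharpE sa pl (phiV (pl x.1 * s) (t * sa x.2)) x.1 x.2 :=
    (Finset.sum_product' _ _ _).symm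
  rw [step1]
  have step2 : (∑ x ∈ A ×ˢ B, sharpE sa pl (phiV (pl x.1 * s) (t * sa x.2)) x.1 x.2)
      = ∑ x ∈ (A ×ˢ B).filter Cond,
          sharpE sa pl (phiV (pl x.1 * s) (t * sa x.2)) x.1 x.2 := by
    refine (Finset.sum_filter_of_ne ?_).symm
    intro x _ hx
    by_contra hc
    exact hx (if_neg hc)
  rw [step2]
  have step3 : (∑ x ∈ (A ×ˢ B).filter Cond,
        sharpE sa pl (phiV (pl x.1 * s) (t * sa x.2)) x.1 x.2)
      = ∑ x ∈ (A ×ˢ B).filter Cond, MonoidAlgebra.single (x.1 * x.2) (1 : ℂ) := by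
    refine Finset.sum_congr rfl ?_
    intro x hx
    rw [Finset.mem_filter] at hx
    exact if_pos hx.2
  rw [step3]
  unfold Zb
  refine Finset.sum_nbij' (fun x => x.1 * x.2)
    (fun u => (pl u * s * phiV (pl u * s) (t * sa u),
      phiV (pl u * s) (t * sa u) * (t * sa u))) ?_ ?_ ?_ ?_ ?_
  -- membership forward
  · intro x hx
    rw [Finset.mem_filter, Finset.mem_product, hA, hB, Finset.mem_filter,
      Finset.mem_filter] at hx
    obtain ⟨⟨⟨-, hs'⟩, -, ht'⟩, h1, h2, h3, h4⟩ := hx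
    rw [Finset.mem_filter]
    refine ⟨Finset.mem_univ _, ?_⟩
    obtain ⟨s', t'⟩ := x
    simp only at hs' ht' h1 h2 h3 h4 ⊢
    set E := phiV (pl s' * s) (t * sa t') with hE
    obtain ⟨hPe, hPA, hPB, hPC⟩ := hP (pl s' * s) (t * sa t')
    have hsE : pl s' * s * E = s' := by rw [← h3]; exact hs'.symm
    have htE : E * (t * sa t') = t' := by
      rw [← h4, ← mul_assoc]; exact ht'.symm
    show s' * t' = pl (s' * t') * (s * t) * sa (s' * t')
    calc s' * t' = (pl s' * s * E) * (E * (t * sa t')) := by rw [hsE, htE]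
    _ = (pl s' * s * (E * E)) * (t * sa t') := by simp only [mul_assoc]
    _ = (pl s' * s * E) * (t * sa t') := by rw [hPe]
    _ = (pl s' * s) * (t * sa t') := hPA
    _ = pl (s' * t') * (s * t) * sa (s' * t') := by
        rw [← h1, ← h2]; simp only [mul_assoc]
  -- membership backward
  · intro u hu
    rw [Finset.mem_filter] at hu
    have hu' : ll sa pl u (s * t) := hu.2
    set E := phiV (pl u * s) (t * sa u) with hE
    obtain ⟨hPe, hPA, hPB, hPC⟩ := hP (pl u * s) (t * sa u)
    have hd : (pl u * s * E) * (E * (t * sa u)) = u := by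
      calc (pl u * s * E) * (E * (t * sa u))
          = (pl u * s * (E * E)) * (t * sa u) := by simp only [mul_assoc]
      _ = (pl u * s * E) * (t * sa u) := by rw [hPe]
      _ = (pl u * s) * (t * sa u) := hPA
      _ = pl u * (s * t) * sa u := by simp only [mul_assoc]
      _ = u := hu'.symm
    have hpls : pl (pl u * s * E) = pl u := by
      refine nle_antisymm ?_ ?_
      · have h1 := nle_pl_mul hsa hpl (pl u * s) E
        have h2 := nle_pl_mul hsa hpl (pl u) s
        have h3 : pl (pl u) = pl u := pl_of_idem hsa hpl (pl_idem hsa hpl u)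
        rw [h3] at h2
        exact nle_trans h1 h2
      · have h1 := nle_pl_mul hsa hpl (pl u * s * E) (E * (t * sa u))
        rw [hd] at h1
        exact h1
    have hsat : sa (E * (t * sa u)) = sa u := by
      refine nle_antisymm ?_ ?_
      · have h1 := nle_sa_mul hsa hpl E (t * sa u)
        have h2 := nle_sa_mul hsa hpl t (sa u)
        have h3 : sa (sa u) = sa u := sa_of_idem hsa hpl (sa_idem hsa hpl u)
        rw [h3] at h2
        exact nle_trans h1 h2
      · have h1 := nle_sa_mul hsa hpl (pl u * s * E) (E * (t * sa u))
        rw [hd] at h1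
        exact h1
    rw [Finset.mem_filter, Finset.mem_product, hA, hB, Finset.mem_filter,
      Finset.mem_filter]
    refine ⟨⟨⟨Finset.mem_univ _, ?_⟩, Finset.mem_univ _, ?_⟩, ?_⟩
    · -- ll (pl u * s * E) s
      show pl u * s * E = pl (pl u * s * E) * s * sa (pl u * s * E)
      rw [hpls, hPB]
    · -- ll (E * (t * sa u)) t
      show E * (t * sa u) = pl (E * (t * sa u)) * t * sa (E * (t * sa u))
      rw [hPC, hsat, mul_assoc]
    · -- Cond
      refine ⟨?_, ?_, ?_, ?_⟩
      · simp only; rw [hd, hpls]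
      · simp only; rw [hd, hsat]
      · simp only; rw [hPB, hpls, hsat]
      · simp only; rw [hPC, hpls, hsat]
  -- left inverse
  · intro x hx
    rw [Finset.mem_filter, Finset.mem_product, hA, hB, Finset.mem_filter,
      Finset.mem_filter] at hx
    obtain ⟨⟨⟨-, hs'⟩, -, ht'⟩, h1, h2, h3, h4⟩ := hx
    obtain ⟨s', t'⟩ := x
    simp only at hs' ht' h1 h2 h3 h4 ⊢
    have hEeq : phiV (pl (s' * t') * s) (t * sa (s' * t'))
        = phiV (pl s' * s) (t * sa t') := by rw [← h1, ← h2]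
    refine Prod.ext ?_ ?_
    · simp only
      rw [hEeq, ← h1, ← h3]
      exact hs'.symm
    · simp only
      rw [hEeq, ← h2, ← h4, ← mul_assoc]
      exact ht'.symm
  -- right inverse
  · intro u hu
    rw [Finset.mem_filter] at hu
    have hu' : ll sa pl u (s * t) := hu.2
    obtain ⟨hPe, hPA, hPB, hPC⟩ := hP (pl u * s) (t * sa u)
    calc (pl u * s * phiV (pl u * s) (t * sa u)) *
          (phiV (pl u * s) (t * sa u) * (t * sa u))
        = (pl u * s * (phiV (pl u * s) (t * sa u) * phiV (pl u * s) (t * sa u)))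
            * (t * sa u) := by simp only [mul_assoc]
    _ = (pl u * s * phiV (pl u * s) (t * sa u)) * (t * sa u) := by rw [hPe]
    _ = (pl u * s) * (t * sa u) := hPA
    _ = pl u * (s * t) * sa u := by simp only [mul_assoc]
    _ = u := hu'.symm
  -- summand equality
  · intro x hx; rfl

end KeySum

section Bij
variable {S : Type*} [Semigroup S] [Fintype S] {sa pl : S → S}
variable (hsa : ∀ s : S, IsKer (Subsemigroup.closure (rIds s)) (sa s))
variable (hpl : ∀ s : S, IsKer (Subsemigroup.closure (lIds s)) (pl s))

omit hsa hpl in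
theorem zhat_apply (f : MonoidAlgebra ℂ S) (a : S) :
    (Zhat sa pl f).coeff a = ∑ x : S, if ll sa pl a x then f.coeff x else 0 := by
  unfold Zhat
  rfl

include hsa hpl

theorem exists_ll_maximal (htrans : Transitive (ll sa pl)) (A : Finset S)
    (hA : A.Nonempty) : ∃ m ∈ A, ∀ x ∈ A, ll sa pl m x → x = m := by
  letI : Preorder S :=
    { le := ll sa pl
      le_refl := ll_refl hsa hpl
      le_trans := fun a b c hab hbc => htrans hab hbc }
  obtain ⟨m, hm, hmax⟩ := A.exists_maximal hA
  refine ⟨m, hm, fun x hx hmx => ?_⟩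
  by_contra hne
  exact hne (ll_antisymm hsa hpl hmx (hmax hx hmx)).symm

theorem zhat_bijective (htrans : Transitive (ll sa pl)) :
    Function.Bijective (Zhat (S := S) sa pl) := by
  classical
  let L : MonoidAlgebra ℂ S →ₗ[ℂ] MonoidAlgebra ℂ S :=
    { toFun := Zhat sa pl
      map_add' := by
        intro f g
        ext a
        have h1 : (Zhat sa pl f + Zhat sa pl g).coeff a = (Zhat sa pl f).coeff a + (Zhat sa pl g).coeff a := rfl
        rw [h1, zhat_apply, zhat_apply, zhat_apply, ← Finset.sum_add_distrib]
        refine Finset.sum_congr rfl fun x _ => ?_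
        have h2 : (f + g).coeff x = f.coeff x + g.coeff x := rfl
        rw [h2]
        by_cases h : ll sa pl a x <;> simp [h]
      map_smul' := by
        intro c f
        ext a
        have h1 : ((c • Zhat sa pl f : MonoidAlgebra ℂ S)).coeff a = c * (Zhat sa pl f).coeff a := rfl
        simp only [RingHom.id_apply]
        rw [h1, zhat_apply, zhat_apply, Finset.mul_sum]
        refine Finset.sum_congr rfl fun x _ => ?_
        have h2 : (c • f : MonoidAlgebra ℂ S).coeff x = c * f.coeff x := rfl
        rw [h2]
        by_cases h : ll sa pl a x <;> simp [h] }
  have hinj : Function.Injective L := by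
    rw [injective_iff_map_eq_zero]
    intro f hf
    by_contra hne
    obtain ⟨m, hm, hmax⟩ :=
      exists_ll_maximal hsa hpl htrans f.coeff.support
        (Finsupp.support_nonempty_iff.mpr (fun h => hne (by rw [← MonoidAlgebra.ofCoeff_coeff f, h]; rfl)))
    have h0 : (Zhat sa pl f).coeff m = 0 := by
      have hz : Zhat sa pl f = 0 := hf
      rw [hz]
      simp
    rw [zhat_apply] at h0
    have hsum : (∑ x : S, if ll sa pl m x then f.coeff x else 0)
        = ∑ x : S, if x = m then f.coeff x else 0 := by
      refine Finset.sum_congr rfl fun x _ => ?_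
      by_cases hx : ll sa pl m x
      · by_cases hfx : f.coeff x = 0
        · simp [hx, hfx]
        · have hxm : x = m := hmax x (Finsupp.mem_support_iff.mpr hfx) hx
          subst hxm
          simp [hx]
      · have hxm : x ≠ m := fun h => hx (h ▸ ll_refl hsa hpl m)
        simp [hx, hxm]
    rw [hsum, Finset.sum_ite_eq' Finset.univ m] at h0
    simp only [Finset.mem_univ, if_true] at h0
    exact Finsupp.mem_support_iff.mp hm h0
  letI : Module.Finite ℂ (MonoidAlgebra ℂ S) :=
    Module.Finite.equiv (MonoidAlgebra.coeffLinearEquiv ℂ).symm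
  have hsurj : Function.Surjective L := LinearMap.injective_iff_surjective.mp hinj
  exact ⟨hinj, hsurj⟩

end Bij


/-- If `≪` is transitive, then `Z(s) ∗ Z(t) = Z(st)` where
`Z(s) ∗ Z(t) = Σ_{s' ≪ s, t' ≪ t} s' ♯^{φ^{((s')⁺ s, t (t')*)}} t'`; consequently the
linear extension of `Z` is a bijective multiplicative map, i.e. an isomorphism of
`ℂ`-algebras from `(ℂS, ∗)` to `ℂS`. -/
theorem stmt19 {S : Type*} [Semigroup S] [Fintype S] (sa pl : S → S)
    (hsa : ∀ s : S, IsKer (Subsemigroup.closure (rIds s)) (sa s))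
    (hpl : ∀ s : S, IsKer (Subsemigroup.closure (lIds s)) (pl s))
    (htrans : Transitive (ll sa pl))
    (phiV : S → S → S) (hphiV : ∀ u v : S, IsPhiLim sa pl u v (phiV u v)) :
    (∀ s t : S,
      (∑ s' ∈ Finset.univ.filter (fun s' => ll sa pl s' s),
        ∑ t' ∈ Finset.univ.filter (fun t' => ll sa pl t' t),
          sharpE sa pl (phiV (pl s' * s) (t * sa t')) s' t') = Zb sa pl (s * t)) ∧
    Function.Bijective (Zhat (S := S) sa pl) := by
  exact ⟨key_sum hsa hpl phiV hphiV, zhat_bijective hsa hpl htrans⟩
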